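/- Let n ≥ 1 and let P = ℂ[x_0, …, x_n, y_0, …, y_n] be the polynomial ring in 2(n+1) variables. Let the torus T = (ℂ^×)^{n+1} act on P by ℂ-algebra automorphisms determined on the variables by g · x_i = g_{i+1} g_i^{-1} x_i and g · y_i = g_i g_{i+1}^{-1} y_i for g = (g_0, …, g_n) ∈ T, with indices taken modulo n+1. Then the subalgebra of T-invariant polynomials P^T equals the ℂ-subalgebra of P generated by the elements x = x_0 x_1 ⋯ x_n, y = y_0 y_1 ⋯ y_n, and z_i = x_i y_i for 0 ≤ i ≤ n. -/

import Mathlib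

open MvPolynomial

noncomputable section

/-- The action of `g ∈ (ℂˣ)^{n+1}` on the polynomial ring
`P = ℂ[x_0, …, x_n, y_0, …, y_n]` (variables indexed by `Fin (n+1) ⊕ Fin (n+1)`,
with `Sum.inl i = xᵢ` and `Sum.inr i = yᵢ`), determined by
`g · xᵢ = g_{i+1} gᵢ⁻¹ xᵢ` and `g · yᵢ = gᵢ g_{i+1}⁻¹ yᵢ` with indices mod `n+1`. -/
def torusAct (n : ℕ) (g : Fin (n + 1) → ℂˣ) :
    MvPolynomial (Fin (n + 1) ⊕ Fin (n + 1)) ℂ →ₐ[ℂ]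
      MvPolynomial (Fin (n + 1) ⊕ Fin (n + 1)) ℂ :=
  MvPolynomial.aeval (fun v => match v with
    | Sum.inl i => MvPolynomial.C ((g (i + 1) * (g i)⁻¹ : ℂˣ) : ℂ) * MvPolynomial.X (Sum.inl i)
    | Sum.inr i => MvPolynomial.C ((g i * (g (i + 1))⁻¹ : ℂˣ) : ℂ) * MvPolynomial.X (Sum.inr i))

namespace TorusInvAux

variable {n : ℕ}

/-- scaling unit attached to each variable -/
def sc (g : Fin (n + 1) → ℂˣ) : Fin (n + 1) ⊕ Fin (n + 1) → ℂˣ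
  | Sum.inl i => g (i + 1) * (g i)⁻¹
  | Sum.inr i => g i * (g (i + 1))⁻¹

lemma torusAct_eq (g : Fin (n + 1) → ℂˣ) :
    torusAct n g = aeval (fun v => (C ((sc g v : ℂ)) * X v :
      MvPolynomial (Fin (n + 1) ⊕ Fin (n + 1)) ℂ)) := by
  unfold torusAct
  congr 1
  funext v
  cases v <;> rfl

/-- the scalar by which a monomial is multiplied -/
def w (g : Fin (n + 1) → ℂˣ) (d : (Fin (n + 1) ⊕ Fin (n + 1)) →₀ ℕ) : ℂ :=
  ∏ v ∈ d.support, ((sc g v : ℂ)) ^ (d v)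

lemma torusAct_monomial (g : Fin (n + 1) → ℂˣ) (d : (Fin (n + 1) ⊕ Fin (n + 1)) →₀ ℕ)
    (c : ℂ) : torusAct n g (monomial d c) = monomial d (w g d * c) := by
  rw [torusAct_eq, aeval_monomial]
  have : (d.prod fun v e => (C ((sc g v : ℂ)) * X v) ^ e) =
      C (w g d) * (d.prod fun v e => (X v : MvPolynomial _ ℂ) ^ e) := by
    rw [Finsupp.prod, Finsupp.prod]
    simp only [mul_pow]
    rw [Finset.prod_mul_distrib]
    congr 1
    simp only [← C_pow]
    rw [← map_prod]
    rfl
  rw [this, ← monomial_eq]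
  simp [algebraMap_eq, C_mul_monomial, mul_comm]

lemma coeff_torusAct (g : Fin (n + 1) → ℂˣ) (p : MvPolynomial (Fin (n + 1) ⊕ Fin (n + 1)) ℂ)
    (d : (Fin (n + 1) ⊕ Fin (n + 1)) →₀ ℕ) :
    coeff d (torusAct n g p) = w g d * coeff d p := by
  conv_lhs => rw [p.as_sum, map_sum]
  simp only [torusAct_monomial]
  rw [coeff_sum]
  simp only [coeff_monomial]
  rw [Finset.sum_ite_eq' p.support d (fun e => w g e * coeff e p)]
  split
  · rfl
  · next h => rw [notMem_support_iff.mp h, mul_zero]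

end TorusInvAux

namespace TorusInvAux

variable {n : ℕ}

/-- the element of the torus which is `2` at coordinate `j` and `1` elsewhere -/
def gd (j : Fin (n + 1)) : Fin (n + 1) → ℂˣ :=
  fun k => if k = j then Units.mk0 (2 : ℂ) two_ne_zero else 1

lemma prod_gd_pow (j : Fin (n + 1)) (e : Fin (n + 1) → ℕ) :
    ∏ i : Fin (n + 1), ((gd j i : ℂ)) ^ (e i) = 2 ^ (e j) := by
  rw [Finset.prod_eq_single j]
  · simp [gd]
  · intro i _ hij
    simp [gd, hij]
  · simp

lemma prod_gd_succ_pow (j : Fin (n + 1)) (e : Fin (n + 1) → ℕ) :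
    ∏ i : Fin (n + 1), ((gd j (i + 1) : ℂ)) ^ (e i) = 2 ^ (e (j - 1)) := by
  rw [Finset.prod_eq_single (j - 1)]
  · simp [gd]
  · intro i _ hij
    have : i + 1 ≠ j := fun h => hij (by rw [← h, add_sub_cancel_right])
    simp [gd, this]
  · simp

lemma w_gd (d : (Fin (n + 1) ⊕ Fin (n + 1)) →₀ ℕ) (j : Fin (n + 1)) :
    w (gd j) d = 2 ^ (d (Sum.inl (j - 1)) + d (Sum.inr j)) *
      ((2 : ℂ) ^ (d (Sum.inl j) + d (Sum.inr (j - 1))))⁻¹ := by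
  have h1 : w (gd j) d = ∏ v : Fin (n + 1) ⊕ Fin (n + 1), ((sc (gd j) v : ℂ)) ^ (d v) := by
    rw [w]
    apply Finset.prod_subset (Finset.subset_univ _)
    intro v _ hv
    rw [Finsupp.notMem_support_iff.mp hv, pow_zero]
  rw [h1, Fintype.prod_sum_type]
  simp only [sc, Units.val_mul, mul_pow, Units.val_inv_eq_inv_val, inv_pow]
  rw [Finset.prod_mul_distrib, Finset.prod_mul_distrib, Finset.prod_inv_distrib, Finset.prod_inv_distrib]
  rw [prod_gd_pow (e := fun i => d (Sum.inl i)), prod_gd_succ_pow (e := fun i => d (Sum.inl i)),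
    prod_gd_pow (e := fun i => d (Sum.inr i)), prod_gd_succ_pow (e := fun i => d (Sum.inr i))]
  rw [pow_add, pow_add]
  field_simp

lemma exp_rel (d : (Fin (n + 1) ⊕ Fin (n + 1)) →₀ ℕ) (j : Fin (n + 1))
    (hw : w (gd j) d = 1) :
    d (Sum.inl (j - 1)) + d (Sum.inr j) = d (Sum.inl j) + d (Sum.inr (j - 1)) := by
  rw [w_gd] at hw
  have h2 : ((2 : ℂ)) ^ (d (Sum.inl j) + d (Sum.inr (j - 1))) ≠ 0 :=
    pow_ne_zero _ two_ne_zero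
  rw [mul_inv_eq_one₀ h2] at hw
  have : (2 : ℕ) ^ (d (Sum.inl (j - 1)) + d (Sum.inr j)) =
      2 ^ (d (Sum.inl j) + d (Sum.inr (j - 1))) := by exact_mod_cast hw
  exact Nat.pow_right_injective le_rfl this

end TorusInvAux

namespace TorusInvAux

variable {n : ℕ}

lemma diff_const (hn : 1 ≤ n) (d : (Fin (n + 1) ⊕ Fin (n + 1)) →₀ ℕ)
    (h : ∀ j, d (Sum.inl (j - 1)) + d (Sum.inr j) = d (Sum.inl j) + d (Sum.inr (j - 1))) :
    ∀ j, (d (Sum.inl j) : ℤ) - d (Sum.inr j) = (d (Sum.inl 0) : ℤ) - d (Sum.inr 0) := by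
  have h1 : (1 : Fin (n + 1)).val = 1 := by
    rw [Fin.val_one']; exact Nat.mod_eq_of_lt (by omega)
  have h' : ∀ j : Fin (n + 1), (d (Sum.inl j) : ℤ) - d (Sum.inr j)
      = (d (Sum.inl (j + 1)) : ℤ) - d (Sum.inr (j + 1)) := by
    intro j
    have := h (j + 1)
    rw [add_sub_cancel_right] at this
    omega
  have key : ∀ m : ℕ, ∀ hm : m < n + 1, (d (Sum.inl ⟨m, hm⟩) : ℤ) - d (Sum.inr ⟨m, hm⟩)
      = (d (Sum.inl 0) : ℤ) - d (Sum.inr 0) := by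
    intro m
    induction m with
    | zero =>
      intro hm
      have : (⟨0, hm⟩ : Fin (n + 1)) = 0 := rfl
      rw [this]
    | succ m ih =>
      intro hm
      have hm' : m < n + 1 := Nat.lt_of_succ_lt hm
      have he : (⟨m + 1, hm⟩ : Fin (n + 1)) = ⟨m, hm'⟩ + 1 := by
        rw [Fin.ext_iff, Fin.val_add, h1]
        exact (Nat.mod_eq_of_lt hm).symm
      rw [he, ← h', ih hm']
  intro j
  have := key j.val j.isLt
  simpa using this

lemma prod_monomial_one {ι : Type} (s : Finset ι)
    (f : ι → ((Fin (n + 1) ⊕ Fin (n + 1)) →₀ ℕ)) :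
    (∏ i ∈ s, monomial (f i) (1 : ℂ)) = monomial (∑ i ∈ s, f i) 1 := by
  classical
  induction s using Finset.cons_induction with
  | empty => simp
  | cons a s ha ih => rw [Finset.prod_cons, Finset.sum_cons, ih, monomial_mul, one_mul]

end TorusInvAux

namespace TorusInvAux

variable {n : ℕ}

def genSet (n : ℕ) : Set (MvPolynomial (Fin (n + 1) ⊕ Fin (n + 1)) ℂ) :=
  {∏ i : Fin (n + 1), MvPolynomial.X (Sum.inl i),
    ∏ i : Fin (n + 1), MvPolynomial.X (Sum.inr i)} ∪
    Set.range (fun i : Fin (n + 1) =>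
      MvPolynomial.X (Sum.inl i) * MvPolynomial.X (Sum.inr i))

lemma hXm (v : Fin (n + 1) ⊕ Fin (n + 1)) :
    (X v : MvPolynomial (Fin (n + 1) ⊕ Fin (n + 1)) ℂ) = monomial (Finsupp.single v 1) 1 :=
  rfl

lemma prod_X_inl :
    (∏ i : Fin (n + 1), X (Sum.inl i) : MvPolynomial (Fin (n + 1) ⊕ Fin (n + 1)) ℂ)
      = monomial (∑ i : Fin (n + 1), Finsupp.single (Sum.inl i) 1) 1 :=
  prod_monomial_one _ _

lemma prod_X_inr :
    (∏ i : Fin (n + 1), X (Sum.inr i) : MvPolynomial (Fin (n + 1) ⊕ Fin (n + 1)) ℂ)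
      = monomial (∑ i : Fin (n + 1), Finsupp.single (Sum.inr i) 1) 1 :=
  prod_monomial_one _ _

lemma z_monomial (j : Fin (n + 1)) :
    (X (Sum.inl j) * X (Sum.inr j) : MvPolynomial (Fin (n + 1) ⊕ Fin (n + 1)) ℂ)
      = monomial (Finsupp.single (Sum.inl j) 1 + Finsupp.single (Sum.inr j) 1) 1 := by
  rw [hXm, hXm, monomial_mul, one_mul]

lemma monomial_mem_x (d : (Fin (n + 1) ⊕ Fin (n + 1)) →₀ ℕ) (c : ℂ) (c0 : ℕ)
    (ha : ∀ j, d (Sum.inl j) = d (Sum.inr j) + c0) :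
    monomial d c ∈ Algebra.adjoin ℂ (genSet n) := by
  have hkey : monomial d c = C c * (∏ i : Fin (n + 1), X (Sum.inl i)) ^ c0 *
      ∏ j : Fin (n + 1), (X (Sum.inl j) * X (Sum.inr j)) ^ (d (Sum.inr j)) := by
    rw [prod_X_inl, monomial_pow, one_pow]
    simp only [z_monomial, monomial_pow, one_pow]
    rw [prod_monomial_one, C_mul_monomial, monomial_mul]
    refine (monomial_eq_monomial_iff _ _ _ _).mpr (Or.inl ⟨?_, by ring⟩)
    ext v
    cases v with
    | inl i =>
      simp only [Finsupp.coe_add, Finsupp.coe_smul, Pi.add_apply, Pi.smul_apply,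
        smul_eq_mul]
      simp [Finsupp.single_apply, Finset.sum_ite_eq', ha i, Finsupp.finset_sum_apply]
      omega
    | inr i =>
      simp [Finsupp.single_apply, Finset.sum_ite_eq', Finsupp.smul_apply]
  rw [hkey]
  refine mul_mem (mul_mem ?_ (pow_mem ?_ _)) (prod_mem fun j _ => pow_mem ?_ _)
  · exact (Algebra.adjoin ℂ (genSet n)).algebraMap_mem c
  · exact Algebra.subset_adjoin (Or.inl (Set.mem_insert _ _))
  · exact Algebra.subset_adjoin (Or.inr ⟨j, rfl⟩)

lemma monomial_mem_y (d : (Fin (n + 1) ⊕ Fin (n + 1)) →₀ ℕ) (c : ℂ) (c0 : ℕ)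
    (hb : ∀ j, d (Sum.inr j) = d (Sum.inl j) + c0) :
    monomial d c ∈ Algebra.adjoin ℂ (genSet n) := by
  have hkey : monomial d c = C c * (∏ i : Fin (n + 1), X (Sum.inr i)) ^ c0 *
      ∏ j : Fin (n + 1), (X (Sum.inl j) * X (Sum.inr j)) ^ (d (Sum.inl j)) := by
    rw [prod_X_inr, monomial_pow, one_pow]
    simp only [z_monomial, monomial_pow, one_pow]
    rw [prod_monomial_one, C_mul_monomial, monomial_mul]
    refine (monomial_eq_monomial_iff _ _ _ _).mpr (Or.inl ⟨?_, by ring⟩)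
    ext v
    cases v with
    | inl i =>
      simp [Finsupp.single_apply, Finset.sum_ite_eq', Finsupp.smul_apply]
    | inr i =>
      simp only [Finsupp.coe_add, Finsupp.coe_smul, Pi.add_apply, Pi.smul_apply,
        smul_eq_mul]
      simp [Finsupp.single_apply, Finset.sum_ite_eq', hb i, Finsupp.finset_sum_apply]
      omega
  rw [hkey]
  refine mul_mem (mul_mem ?_ (pow_mem ?_ _)) (prod_mem fun j _ => pow_mem ?_ _)
  · exact (Algebra.adjoin ℂ (genSet n)).algebraMap_mem c
  · exact Algebra.subset_adjoin (Or.inl (Set.mem_insert_of_mem _ rfl))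
  · exact Algebra.subset_adjoin (Or.inr ⟨j, rfl⟩)

end TorusInvAux

namespace TorusInvAux

variable {n : ℕ}

lemma torusAct_X' (g : Fin (n + 1) → ℂˣ) (v : Fin (n + 1) ⊕ Fin (n + 1)) :
    torusAct n g (X v) = C ((sc g v : ℂ)) * X v := by
  rw [torusAct_eq, aeval_X]

lemma prod_shift (g : Fin (n + 1) → ℂˣ) :
    (∏ i : Fin (n + 1), ((g (i + 1) : ℂ))) = ∏ i : Fin (n + 1), ((g i : ℂ)) := by
  exact Fintype.prod_equiv (Equiv.addRight (1 : Fin (n + 1)))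
    (fun i => ((g (i + 1) : ℂ))) (fun i => ((g i : ℂ))) (fun i => rfl)

lemma prod_sc_inl (g : Fin (n + 1) → ℂˣ) :
    (∏ i : Fin (n + 1), ((sc g (Sum.inl i) : ℂ))) = 1 := by
  simp only [sc, Units.val_mul, Units.val_inv_eq_inv_val]
  rw [Finset.prod_mul_distrib, Finset.prod_inv_distrib, prod_shift]
  exact mul_inv_cancel₀ (Finset.prod_ne_zero_iff.mpr fun i _ => (g i).ne_zero)

lemma prod_sc_inr (g : Fin (n + 1) → ℂˣ) :
    (∏ i : Fin (n + 1), ((sc g (Sum.inr i) : ℂ))) = 1 := by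
  simp only [sc, Units.val_mul, Units.val_inv_eq_inv_val]
  rw [Finset.prod_mul_distrib, Finset.prod_inv_distrib, prod_shift]
  exact mul_inv_cancel₀ (Finset.prod_ne_zero_iff.mpr fun i _ => (g i).ne_zero)

lemma act_prod_inl (g : Fin (n + 1) → ℂˣ) :
    torusAct n g (∏ i : Fin (n + 1), X (Sum.inl i)) = ∏ i : Fin (n + 1), X (Sum.inl i) := by
  rw [map_prod]
  simp only [torusAct_X']
  rw [Finset.prod_mul_distrib, ← map_prod, prod_sc_inl, map_one, one_mul]

lemma act_prod_inr (g : Fin (n + 1) → ℂˣ) :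
    torusAct n g (∏ i : Fin (n + 1), X (Sum.inr i)) = ∏ i : Fin (n + 1), X (Sum.inr i) := by
  rw [map_prod]
  simp only [torusAct_X']
  rw [Finset.prod_mul_distrib, ← map_prod, prod_sc_inr, map_one, one_mul]

lemma act_z (g : Fin (n + 1) → ℂˣ) (j : Fin (n + 1)) :
    torusAct n g (X (Sum.inl j) * X (Sum.inr j)) = X (Sum.inl j) * X (Sum.inr j) := by
  rw [map_mul, torusAct_X', torusAct_X']
  have hu : (sc g (Sum.inl j)) * (sc g (Sum.inr j)) = 1 := by
    simp only [sc]
    group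
  have : ((sc g (Sum.inl j) : ℂ)) * ((sc g (Sum.inr j) : ℂ)) = 1 := by
    rw [← Units.val_mul, hu, Units.val_one]
  calc C ((sc g (Sum.inl j) : ℂ)) * X (Sum.inl j) * (C ((sc g (Sum.inr j) : ℂ)) * X (Sum.inr j))
      = C (((sc g (Sum.inl j) : ℂ)) * ((sc g (Sum.inr j) : ℂ))) *
        (X (Sum.inl j) * X (Sum.inr j)) := by rw [map_mul]; ring
    _ = X (Sum.inl j) * X (Sum.inr j) := by rw [this, map_one, one_mul]

end TorusInvAux


/-- The torus invariants `P^T` of `P = ℂ[x_0, …, x_n, y_0, …, y_n]` under the action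
`g · xᵢ = g_{i+1} gᵢ⁻¹ xᵢ`, `g · yᵢ = gᵢ g_{i+1}⁻¹ yᵢ` form exactly the `ℂ`-subalgebra
generated by `x = x_0 ⋯ x_n`, `y = y_0 ⋯ y_n` and `zᵢ = xᵢ yᵢ` for `0 ≤ i ≤ n`. -/
theorem torus_invariants_eq_adjoin (n : ℕ) (hn : 1 ≤ n) :
    {p : MvPolynomial (Fin (n + 1) ⊕ Fin (n + 1)) ℂ |
        ∀ g : Fin (n + 1) → ℂˣ, torusAct n g p = p}
      = ↑(Algebra.adjoin ℂ
          ({∏ i : Fin (n + 1), MvPolynomial.X (Sum.inl i),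
            ∏ i : Fin (n + 1), MvPolynomial.X (Sum.inr i)} ∪
            Set.range (fun i : Fin (n + 1) =>
              MvPolynomial.X (Sum.inl i) * MvPolynomial.X (Sum.inr i)) :
            Set (MvPolynomial (Fin (n + 1) ⊕ Fin (n + 1)) ℂ))) := by
  ext p
  simp only [Set.mem_setOf_eq, SetLike.mem_coe]
  constructor
  · intro hp
    show p ∈ Algebra.adjoin ℂ (TorusInvAux.genSet n)
    rw [p.as_sum]
    apply Subalgebra.sum_mem
    intro d hd
    have hw : ∀ g, TorusInvAux.w g d = 1 := by
      intro g
      have hcg := congrArg (MvPolynomial.coeff d) (hp g)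
      rw [TorusInvAux.coeff_torusAct] at hcg
      exact mul_right_cancel₀ (mem_support_iff.mp hd) (by rw [hcg, one_mul])
    have hrel : ∀ j, d (Sum.inl (j - 1)) + d (Sum.inr j)
        = d (Sum.inl j) + d (Sum.inr (j - 1)) :=
      fun j => TorusInvAux.exp_rel d j (hw _)
    have hconst := TorusInvAux.diff_const hn d hrel
    rcases le_total (d (Sum.inr 0)) (d (Sum.inl 0)) with h | h
    · exact TorusInvAux.monomial_mem_x d _ (d (Sum.inl 0) - d (Sum.inr 0))
        (fun j => by have := hconst j; omega)
    · exact TorusInvAux.monomial_mem_y d _ (d (Sum.inr 0) - d (Sum.inl 0))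
        (fun j => by have := hconst j; omega)
  · intro hp g
    induction hp using Algebra.adjoin_induction with
    | mem q hq =>
      rcases hq with hq | ⟨i, rfl⟩
      · rcases hq with rfl | hq
        · exact TorusInvAux.act_prod_inl g
        · rw [Set.mem_singleton_iff] at hq
          rw [hq]
          exact TorusInvAux.act_prod_inr g
      · exact TorusInvAux.act_z g i
    | algebraMap r => exact (torusAct n g).commutes r
    | add x y _ _ hx hy => rw [map_add, hx, hy]
    | mul x y _ _ hx hy => rw [map_mul, hx, hy]
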